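/- The Čech complex Ω_• in persistence modules over ℤⁿ is a flat resolution of I(−𝟙), where 𝟙 = (1,…,1): the homology H_d(Ω_•) vanishes for all d > 0, and the augmentation morphism ε : Ω_0 = F(e_{{1,…,n}}) → I(−𝟙), whose component at each z ∈ ℤⁿ with z ≤ −𝟙 is the identity of k (and which is zero at all other z), is surjective and induces an isomorphism H_0(Ω_•) ≅ I(−𝟙). Equivalently, the augmented complex 0 → Ω_n → Ω_{n−1} → ⋯ → Ω_0 → I(−𝟙) → 0 is exact. -/

import Mathlib

/-!
STATEMENT 10: The Čech complex `Ω_•` of persistence modules over `ℤⁿ` is a flat resolution of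
`I(−𝟙)`: the augmented complex `0 → Ω_n → ⋯ → Ω_0 → I(−𝟙) → 0` is exact.

Persistence modules over `ℤⁿ` are formalized as functors `(Fin n → ℤ) ⥤ ModuleCat k`.
`F(a)` (for `a ∈ (ℤ ∪ {−∞})ⁿ`) is realized gradewise as the submodule
`gate k P = {x : k | P ∨ x = 0}` of `k` (which is `k` if `P` holds and `0` otherwise), and
`I(−𝟙)` is realized gradewise as the quotient `k ⧸ gate k (¬ P)` (which is `k` iff `v ≤ −𝟙`),
with the canonical structure maps.  Exactness is expressed componentwise (kernels, images and
exactness of persistence modules are computed gradewise).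
-/

open CategoryTheory Limits

attribute [-instance] CategoryTheory.pi

noncomputable instance (k : Type) [Field k] (n : ℕ) :
    HasFiniteBiproducts ((Fin n → ℤ) ⥤ ModuleCat k) :=
  @Abelian.hasFiniteBiproducts _ _ inferInstance

variable (k : Type) [Field k]

/-- The submodule `{x : k | P ∨ x = 0}` of `k`: it is all of `k` if `P` holds, and `0` otherwise. -/
def gate (P : Prop) : Submodule k k where
  carrier := {x | P ∨ x = 0}
  add_mem' := by
    rintro a b (h | ha) hb
    · exact Or.inl h
    · rcases hb with h | hb
      · exact Or.inl h
      · exact Or.inr (by rw [ha, hb, add_zero])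
  zero_mem' := Or.inr rfl
  smul_mem' := by
    rintro c x (h | hx)
    · exact Or.inl h
    · exact Or.inr (by rw [hx, smul_zero])

lemma gate_mono {P Q : Prop} (h : P → Q) : gate k P ≤ gate k Q := fun _ hx => hx.imp h id

/-- Inclusion of gates. -/
def gateHom {P Q : Prop} (h : P → Q) : ↥(gate k P) →ₗ[k] ↥(gate k Q) :=
  Submodule.inclusion (gate_mono k h)

variable (n : ℕ)

/-- The flat persistence module `F(a)`, `a ∈ (ℤ ∪ {−∞})ⁿ`:
`F(a)_v = k` if `a ≤ v` and `0` otherwise, with identity structure maps between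
nonzero components. -/
def flatF (a : Fin n → WithBot ℤ) : (Fin n → ℤ) ⥤ ModuleCat k where
  obj v := ModuleCat.of k (gate k (∀ i, a i ≤ ((v i : ℤ) : WithBot ℤ)))
  map {v w} h := ModuleCat.ofHom (gateHom k (fun hc i => le_trans (hc i) (WithBot.coe_le_coe.mpr (leOfHom h i))))
  map_id := fun _ => rfl
  map_comp := fun _ _ => rfl

/-- The injective persistence module `I(−𝟙)`:  `I(−𝟙)_v = k` if `v ≤ −𝟙` and `0` otherwise,
with identity structure maps between nonzero components (realized gradewise as a quotient
of `k`). -/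
def injNegOne : (Fin n → ℤ) ⥤ ModuleCat k where
  obj v := ModuleCat.of k (k ⧸ gate k (¬ ∀ i, v i ≤ -1))
  map {v w} h := ModuleCat.ofHom (Submodule.mapQ _ _ LinearMap.id
    (gate_mono k (fun hv hw => hv (fun i => le_trans (leOfHom h i) (hw i)))))
  map_id v := ModuleCat.hom_ext (Submodule.linearMap_qext _ rfl)
  map_comp f g := ModuleCat.hom_ext (Submodule.linearMap_qext _ rfl)

/-- `e_Q ∈ (ℤ ∪ {−∞})ⁿ`: the vector whose `i`-th entry is `−∞` if `i ∈ Q` and `0` otherwise. -/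
def eQ (Q : Finset (Fin n)) : Fin n → WithBot ℤ := fun i => if i ∈ Q then ⊥ else 0

/-- The canonical inclusion `F(e_Q) ⟶ F(e_{Q'})` for `Q ⊆ Q'`. -/
def natInc {Q Q' : Finset (Fin n)} (h : Q ⊆ Q') : flatF k n (eQ n Q) ⟶ flatF k n (eQ n Q') where
  app v := ModuleCat.ofHom (gateHom k (fun hc i => by
    by_cases hi : i ∈ Q'
    · simp [eQ, hi]
    · have hiQ : i ∉ Q := fun hq => hi (h hq)
      have := hc i
      simpa [eQ, hi, hiQ] using this))
  naturality := fun _ _ _ => rfl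

/-- Indexing set of the degree-`d` part of the Čech complex: subsets `Q ⊆ {1,…,n}`
with `|Q| = n − d` (for `d > n` this is empty, so `Ω_d = 0`). -/
abbrev cechIdx (d : ℕ) := {Q : Finset (Fin n) // Q.card + d = n}

/-- The degree-`d` component `Ω_d = ⊕_{|Q| = n−d} F(e_Q)` of the Čech complex. -/
noncomputable def cechObj (d : ℕ) : (Fin n → ℤ) ⥤ ModuleCat k :=
  ⨁ (fun Q : cechIdx n d => flatF k n (eQ n Q.1))

/-- The boundary `κ_{d+1} : Ω_{d+1} ⟶ Ω_d` of the Čech complex: its component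
`F(e_Q) ⟶ F(e_{Q'})` is `(−1)^m` times the canonical inclusion when `Q ⊆ Q'`
(where, `Q'` being `Q ∪ {q}`, `m` is the number of elements of `Q'` strictly smaller
than `q`), and `0` otherwise. -/
noncomputable def cechD (d : ℕ) : cechObj k n (d+1) ⟶ cechObj k n d :=
  biproduct.matrix fun Q Q' =>
    if h : Q.1 ⊆ Q'.1 then
      (((-1 : ℤ) ^ ((Q'.1.filter (fun x => ∃ q ∈ Q'.1 \ Q.1, x < q)).card)) • natInc k n h)
    else 0

/-- The augmentation component `F(e_Q) ⟶ I(−𝟙)` whose component at each grade `v` with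
`v ≤ −𝟙` is the identity of `k` (and which is zero at all other grades). -/
noncomputable def epsComp (Q : Finset (Fin n)) : flatF k n (eQ n Q) ⟶ injNegOne k n where
  app v := ModuleCat.ofHom ((Submodule.mkQ _).comp (Submodule.subtype _))
  naturality := fun _ _ _ => rfl

/-- The augmentation morphism `ε : Ω_0 ⟶ I(−𝟙)`. -/
noncomputable def cechEps : cechObj k n 0 ⟶ injNegOne k n :=
  biproduct.desc fun Q => epsComp k n Q.1

namespace Stmt10Aux

open Finset

variable {k} {n}

/-- sign `(−1)^{#{x ∈ P : x < q}}` -/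
def sg (P : Finset (Fin n)) (q : Fin n) : ℤ := (-1) ^ (P.filter (fun x => x < q)).card

lemma sg_mul_self (P : Finset (Fin n)) (q : Fin n) : sg P q * sg P q = 1 := by
  unfold sg
  rw [← pow_add, ← two_mul, pow_mul]
  norm_num

lemma filter_lt_insert_card {P : Finset (Fin n)} {p : Fin n} (hp : p ∉ P) (q : Fin n) :
    ((insert p P).filter (fun x => x < q)).card
      = (P.filter (fun x => x < q)).card + (if p < q then 1 else 0) := by
  rw [Finset.filter_insert]
  split
  · rw [Finset.card_insert_of_notMem (fun h => hp (Finset.mem_of_mem_filter _ h))]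
  · simp

lemma sg_cross {P : Finset (Fin n)} {p q : Fin n} (hp : p ∉ P) (hq : q ∉ P) (hne : p ≠ q) :
    sg (insert p P) q * sg P p = - (sg (insert q P) p * sg P q) := by
  unfold sg
  rw [filter_lt_insert_card hp q, filter_lt_insert_card hq p]
  rcases hne.lt_or_gt with h | h
  · rw [if_pos h, if_neg (asymm h)]
    simp [pow_add, pow_succ]
    ring
  · rw [if_neg (asymm h), if_pos h]
    simp [pow_add, pow_succ]
    ring

lemma sg_cross' {P : Finset (Fin n)} {p q : Fin n} (hp : p ∉ P) (hq : q ∉ P) (hne : p ≠ q) :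
    sg P p * sg P q = - (sg (insert p P) q * sg (insert q P) p) := by
  unfold sg
  rw [filter_lt_insert_card hp q, filter_lt_insert_card hq p]
  rcases hne.lt_or_gt with h | h
  · rw [if_pos h, if_neg (asymm h)]
    simp [pow_add, pow_succ]
    ring
  · rw [if_neg (asymm h), if_pos h]
    simp [pow_add, pow_succ]
    ring

/-- the gate predicate at grade `v` -/
abbrev GP (v : Fin n → ℤ) (R : Finset (Fin n)) : Prop :=
  ∀ i, eQ n R i ≤ ((v i : ℤ) : WithBot ℤ)

lemma GP_iff {v : Fin n → ℤ} {R : Finset (Fin n)} : GP v R ↔ ∀ i ∉ R, 0 ≤ v i := by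
  constructor
  · intro h i hi
    have := h i
    rw [eQ, if_neg hi] at this
    exact_mod_cast this
  · intro h i
    rw [eQ]
    by_cases hi : i ∈ R
    · simp [hi]
    · rw [if_neg hi]
      exact_mod_cast h i hi

end Stmt10Aux
namespace Stmt10Aux

section Coord

variable {k} {n}

variable (v : Fin n → ℤ)

/-- The family of flat modules summed in `cechObj`. -/
abbrev bfam (d : ℕ) : cechIdx n d → ((Fin n → ℤ) ⥤ ModuleCat k) :=
  fun Q => flatF k n (eQ n Q.1)

/-- `k`-valued coordinate of an element of `Ω_d` at grade `v`, at index `R`. -/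
noncomputable def coK (d : ℕ) (x : (cechObj k n d).obj v) (R : Finset (Fin n)) : k :=
  if h : R.card + d = n then
    Subtype.val (p := fun y => y ∈ gate k (GP v R)) (((biproduct.π (bfam (k := k) (n := n) d) ⟨R, h⟩).app v) x)
  else 0

lemma coK_mem (d : ℕ) (x : (cechObj k n d).obj v) (R : Finset (Fin n)) :
    coK v d x R ∈ gate k (GP v R) := by
  unfold coK
  split
  · exact Subtype.coe_prop _
  · exact zero_mem _

lemma coK_zero (d : ℕ) (R : Finset (Fin n)) : coK v d (0 : (cechObj k n d).obj v) R = 0 := by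
  unfold coK
  split
  · erw [map_zero]; rfl
  · rfl

lemma decomp (d : ℕ) (x : (cechObj k n d).obj v) :
    x = ∑ Q : cechIdx n d,
      ((biproduct.ι (bfam (k := k) (n := n) d) Q).app v)
        (((biproduct.π (bfam (k := k) (n := n) d) Q).app v) x) := by
  have h2 := congrFun (congrArg NatTrans.app (biproduct.total (f := bfam (k := k) (n := n) d))) v
  have h3 := LinearMap.congr_fun (congrArg ModuleCat.Hom.hom h2) x
  simp only [NatTrans.app_sum, NatTrans.id_app, LinearMap.sum_apply, NatTrans.comp_app] at h3
  erw [ModuleCat.hom_sum, LinearMap.sum_apply] at h3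
  exact h3.symm

lemma coK_ι (d : ℕ) (Q : cechIdx n d) (y : ↥(gate k (GP v Q.1))) (R : Finset (Fin n)) :
    coK v d (((biproduct.ι (bfam (k := k) (n := n) d) Q).app v) y) R
      = if R = Q.1 then (y : k) else 0 := by
  unfold coK
  split
  · rename_i h
    by_cases hQ : R = Q.1
    · obtain ⟨Q, hQ2⟩ := Q
      simp only at hQ
      subst hQ
      have h5 := ConcreteCategory.congr_hom (congrFun (congrArg NatTrans.app
        (biproduct.ι_π_self (bfam (k := k) (n := n) d) ⟨R, hQ2⟩)) v) y
      rw [if_pos rfl]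
      exact congrArg Subtype.val h5
    · have hne : Q ≠ (⟨R, h⟩ : cechIdx n d) := fun hc => hQ (congrArg Subtype.val hc).symm
      have h5 := ConcreteCategory.congr_hom (congrFun (congrArg NatTrans.app
        (biproduct.ι_π_ne (bfam (k := k) (n := n) d) hne)) v) y
      rw [if_neg hQ]
      simp only [zero_app] at h5
      rw [show (((biproduct.π (bfam (k := k) (n := n) d) ⟨R, h⟩).app v)
        (((biproduct.ι (bfam (k := k) (n := n) d) Q).app v) y)) = 0 from h5]
      rfl
  · rename_i h
    rw [if_neg (fun hc : R = Q.1 => h (by rw [hc]; exact Q.2))]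

end Coord

end Stmt10Aux
namespace Stmt10Aux

section Coord2

variable {k} {n}

variable (v : Fin n → ℤ)

lemma coK_sum (d : ℕ) {ι : Type} (s : Finset ι) (f : ι → (cechObj k n d).obj v)
    (R : Finset (Fin n)) :
    coK v d (∑ i ∈ s, f i) R = ∑ i ∈ s, coK v d (f i) R := by
  unfold coK
  split
  · erw [map_sum, AddSubmonoidClass.coe_finset_sum]
  · simp

/-- unique element of `R \ Q` when `Q ⊆ R` has one fewer element -/
lemma sdiff_eq_singleton {Q R : Finset (Fin n)} (hQR : Q ⊆ R) (hc : Q.card + 1 = R.card) :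
    ∀ q ∈ R \ Q, R \ Q = {q} ∧ Q = R.erase q := by
  intro q hq
  have hcard : (R \ Q).card = 1 := by
    rw [Finset.card_sdiff_of_subset hQR]; omega
  obtain ⟨a, ha⟩ := Finset.card_eq_one.mp hcard
  have hqa : q = a := by rw [ha] at hq; exact Finset.mem_singleton.mp hq
  subst hqa
  refine ⟨ha, ?_⟩
  rw [Finset.erase_eq, ← ha, Finset.sdiff_sdiff_eq_self hQR]

lemma sum_idx_erase {d : ℕ} {R : Finset (Fin n)} (hR : R.card + d = n)
    (F : Finset (Fin n) → k) :
    (∑ Q : cechIdx n (d+1), if Q.1 ⊆ R then F Q.1 else 0) = ∑ q ∈ R, F (R.erase q) := by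
  classical
  classical
  have hsub : ∀ Q : cechIdx n (d+1), (if Q.1 ⊆ R then F Q.1 else 0) ≠ 0 → Q.1 ⊆ R := by
    intro Q h2
    by_contra hc
    exact h2 (if_neg hc)
  have hcard : ∀ Q : cechIdx n (d+1), Q.1.card + 1 = R.card := fun Q => by
    have := Q.2; omega
  have hne : ∀ (Q : cechIdx n (d+1)), Q.1 ⊆ R → (R \ Q.1).Nonempty := by
    intro Q hs
    rw [← Finset.card_pos, Finset.card_sdiff_of_subset hs]
    have := hcard Q
    omega
  refine Finset.sum_bij_ne_zero
    (fun Q _ h2 => (R \ Q.1).min' (hne Q (hsub Q h2))) ?_ ?_ ?_ ?_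
  · intro Q h1 h2
    exact (Finset.mem_sdiff.mp ((R \ Q.1).min'_mem _)).1
  · intro Q1 h11 h12 Q2 h21 h22 heq
    have e1 := (sdiff_eq_singleton (hsub Q1 h12) (hcard Q1) _ ((R \ Q1.1).min'_mem (hne Q1 (hsub Q1 h12)))).2
    have e2 := (sdiff_eq_singleton (hsub Q2 h22) (hcard Q2) _ ((R \ Q2.1).min'_mem (hne Q2 (hsub Q2 h22)))).2
    have heq' : (R \ Q1.1).min' (hne Q1 (hsub Q1 h12)) = (R \ Q2.1).min' (hne Q2 (hsub Q2 h22)) := heq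
    exact Subtype.ext (by rw [e1, e2, heq'])
  · intro b hb hgb
    have hR1 : 1 ≤ R.card := Finset.card_pos.mpr ⟨b, hb⟩
    refine ⟨⟨R.erase b, by rw [Finset.card_erase_of_mem hb]; omega⟩, Finset.mem_univ _, ?_, ?_⟩
    · show (if R.erase b ⊆ R then F (R.erase b) else 0) ≠ 0
      rw [if_pos (Finset.erase_subset _ _)]
      exact hgb
    · have hmem := (R \ (R.erase b)).min'_mem
        (by rw [Finset.sdiff_erase_self hb]; exact Finset.singleton_nonempty b)
      have hm1 := (Finset.mem_sdiff.mp hmem).1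
      have hm2 := (Finset.mem_sdiff.mp hmem).2
      by_contra hne'
      exact hm2 (Finset.mem_erase.mpr ⟨hne', hm1⟩)
  · intro Q h1 h2
    have e1 := (sdiff_eq_singleton (hsub Q h2) (hcard Q) _ ((R \ Q.1).min'_mem (hne Q (hsub Q h2)))).2
    rw [if_pos (hsub Q h2), ← e1]

end Coord2

end Stmt10Aux
namespace Stmt10Aux

section Coord3

variable {k} {n}

variable (v : Fin n → ℤ)

lemma sgnE_card {P : Finset (Fin n)} {q : Fin n} (hq : q ∉ P) :
    ((insert q P).filter (fun x => ∃ p ∈ (insert q P) \ P, x < p)).card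
      = (P.filter (fun x => x < q)).card := by
  have hdiff : (insert q P) \ P = {q} := by
    ext a
    simp only [Finset.mem_sdiff, Finset.mem_insert, Finset.mem_singleton]
    constructor
    · rintro ⟨h1 | h1, h2⟩
      · exact h1
      · exact absurd h1 h2
    · rintro rfl
      exact ⟨Or.inl rfl, hq⟩
  simp only [hdiff, Finset.mem_singleton, exists_eq_left]
  rw [Finset.filter_insert, if_neg (lt_irrefl q)]

lemma coK_D_ι (d : ℕ) (Q : cechIdx n (d+1)) (z : ↥(gate k (GP v Q.1)))
    {R : Finset (Fin n)} (hR : R.card + d = n) :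
    coK v d (((cechD k n d).app v) (((biproduct.ι (bfam (k := k) (n := n) (d+1)) Q).app v) z)) R
      = if Q.1 ⊆ R then
          ((((-1 : ℤ) ^ ((R.filter (fun x => ∃ q ∈ R \ Q.1, x < q)).card)) : ℤ) : k) * (z : k)
        else 0 := by
  have e : biproduct.ι (bfam (k := k) (n := n) (d+1)) Q ≫ cechD k n d
        ≫ biproduct.π (bfam (k := k) (n := n) d) ⟨R, hR⟩
      = (if h : Q.1 ⊆ (⟨R, hR⟩ : cechIdx n d).1 then
          (((-1 : ℤ) ^ (((⟨R, hR⟩ : cechIdx n d).1.filter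
            (fun x => ∃ q ∈ (⟨R, hR⟩ : cechIdx n d).1 \ Q.1, x < q)).card)) • natInc k n h)
        else 0) := by
    unfold cechD
    erw [biproduct.matrix_π, biproduct.ι_desc]
  have e2 := ConcreteCategory.congr_hom (congrFun (congrArg NatTrans.app e) v) z
  unfold coK
  rw [dif_pos hR]
  by_cases h : Q.1 ⊆ R
  · rw [dif_pos h] at e2
    rw [if_pos h]
    have e3 : ((biproduct.π (bfam (k := k) (n := n) d) ⟨R, hR⟩).app v)
        (((cechD k n d).app v) (((biproduct.ι (bfam (k := k) (n := n) (d+1)) Q).app v) z))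
        = ((((-1 : ℤ) ^ ((R.filter (fun x => ∃ q ∈ R \ Q.1, x < q)).card)) • natInc k n h).app v) z := e2
    rw [e3, NatTrans.app_zsmul]
    have e6 := map_zsmul ((gate k (GP v R)).subtype)
      ((-1 : ℤ) ^ ((R.filter (fun x => ∃ q ∈ R \ Q.1, x < q)).card))
      (((natInc k n h).app v) z)
    exact e6.trans (by rw [zsmul_eq_mul]; rfl)
  · rw [dif_neg h] at e2
    rw [if_neg h]
    have e3 : ((biproduct.π (bfam (k := k) (n := n) d) ⟨R, hR⟩).app v)
        (((cechD k n d).app v) (((biproduct.ι (bfam (k := k) (n := n) (d+1)) Q).app v) z))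
        = ((0 : flatF k n (eQ n Q.1) ⟶ flatF k n (eQ n R)).app v) z := e2
    rw [e3]
    rfl

lemma coK_D (d : ℕ) (x : (cechObj k n (d+1)).obj v) {R : Finset (Fin n)}
    (hR : R.card + d = n) :
    coK v d (((cechD k n d).app v) x) R
      = ∑ q ∈ R, ((sg (R.erase q) q : ℤ) : k) * coK v (d+1) x (R.erase q) := by
  conv_lhs => rw [decomp v (d+1) x]
  erw [map_sum, coK_sum]
  have hterm : ∀ Q : cechIdx n (d+1),
      coK v d (((cechD k n d).app v) (((biproduct.ι (bfam (k := k) (n := n) (d+1)) Q).app v)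
        (((biproduct.π (bfam (k := k) (n := n) (d+1)) Q).app v) x))) R
      = if Q.1 ⊆ R then
          ((((-1 : ℤ) ^ ((R.filter (fun x => ∃ q ∈ R \ Q.1, x < q)).card)) : ℤ) : k)
            * coK v (d+1) x Q.1
        else 0 := by
    intro Q
    erw [coK_D_ι v d Q _ hR]
    have hco : Subtype.val (((biproduct.π (bfam (k := k) (n := n) (d+1)) Q).app v) x)
        = coK v (d+1) x Q.1 := by
      unfold coK
      rw [dif_pos Q.2]
    rw [hco]
  rw [Finset.sum_congr rfl (fun Q _ => hterm Q)]
  rw [sum_idx_erase hR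
    (fun S => ((((-1 : ℤ) ^ ((R.filter (fun x => ∃ q ∈ R \ S, x < q)).card)) : ℤ) : k)
      * coK v (d+1) x S)]
  refine Finset.sum_congr rfl ?_
  intro q hq
  have h1 : insert q (R.erase q) = R := Finset.insert_erase hq
  have h2 : q ∉ R.erase q := Finset.notMem_erase q R
  have h3 := sgnE_card (P := R.erase q) (q := q) h2
  rw [h1] at h3
  rw [h3]
  rfl

end Coord3

end Stmt10Aux
namespace Stmt10Aux

section Coord4

variable {k} {n}

variable (v : Fin n → ℤ)

lemma gate_val_eq_zero {P : Prop} (hP : ¬P) {x : k} (hx : x ∈ gate k P) : x = 0 :=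
  hx.resolve_left hP

lemma GP_mono {q0 : Fin n} (hq0 : 0 ≤ v q0) {R : Finset (Fin n)}
    (h : GP v (insert q0 R)) : GP v R := by
  rw [GP_iff] at h ⊢
  intro i hi
  by_cases hiq : i = q0
  · exact hiq ▸ hq0
  · exact h i (fun hmem => by
      rcases Finset.mem_insert.mp hmem with h1 | h1
      · exact hiq h1
      · exact hi h1)

lemma coK_ext {d : ℕ} {x y : (cechObj k n d).obj v}
    (h : ∀ R, coK v d x R = coK v d y R) : x = y := by
  rw [decomp v d x, decomp v d y]
  apply Finset.sum_congr rfl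
  intro Q _
  congr 1
  apply Subtype.ext
  have hx := h Q.1
  unfold coK at hx
  rw [dif_pos Q.2, dif_pos Q.2] at hx
  exact hx

lemma eq_zero_of_coK {d : ℕ} {x : (cechObj k n d).obj v}
    (h : ∀ R : Finset (Fin n), R.card + d = n → coK v d x R = 0) : x = 0 := by
  apply coK_ext
  intro R
  rw [coK_zero]
  by_cases hR : R.card + d = n
  · exact h R hR
  · unfold coK
    rw [dif_neg hR]

lemma coK_mk (d : ℕ) (c : ∀ Q : cechIdx n d, ↥(gate k (GP v Q.1))) (R : Finset (Fin n)) :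
    coK v d (∑ Q : cechIdx n d, ((biproduct.ι (bfam (k := k) (n := n) d) Q).app v) (c Q)) R
      = if h : R.card + d = n then (c ⟨R, h⟩ : k) else 0 := by
  erw [coK_sum]
  by_cases h : R.card + d = n
  · rw [dif_pos h]
    rw [Finset.sum_eq_single (⟨R, h⟩ : cechIdx n d)]
    · rw [coK_ι, if_pos rfl]
    · intro Q _ hQ
      rw [coK_ι, if_neg (fun hc : R = Q.1 => hQ (Subtype.ext hc.symm))]
    · intro hc
      exact absurd (Finset.mem_univ _) hc
  · rw [dif_neg h]
    apply Finset.sum_eq_zero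
    intro Q _
    rw [coK_ι, if_neg (fun hc : R = Q.1 => h (by rw [hc]; exact Q.2))]

/-- The contracting homotopy: if the level-(e−1) boundary coordinate sums of `x ∈ Ω_e` vanish,
then `x` is a boundary. -/
lemma homotopy (q0 : Fin n) (hq0 : 0 ≤ v q0) (e : ℕ) (x : (cechObj k n e).obj v)
    (hx : ∀ R : Finset (Fin n), R.card + e = n + 1 →
      ∑ q ∈ R, ((sg (R.erase q) q : ℤ) : k) * coK v e x (R.erase q) = 0) :
    ∃ y : (cechObj k n (e+1)).obj v, ((cechD k n e).app v) y = x := by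
  classical
  set c : ∀ Q : cechIdx n (e+1), ↥(gate k (GP v Q.1)) := fun Q =>
    if hQ : q0 ∈ Q.1 then 0
    else ⟨((sg Q.1 q0 : ℤ) : k) * coK v e x (insert q0 Q.1), by
      rcases coK_mem v e x (insert q0 Q.1) with h1 | h1
      · exact Or.inl (GP_mono v hq0 h1)
      · exact Or.inr (by rw [h1, mul_zero])⟩ with hcdef
  set y : (cechObj k n (e+1)).obj v :=
    ∑ Q : cechIdx n (e+1), ((biproduct.ι (bfam (k := k) (n := n) (e+1)) Q).app v) (c Q) with hydef
  refine ⟨y, ?_⟩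
  apply coK_ext
  intro R
  by_cases hR : R.card + e = n
  · have hyc : ∀ q ∈ R, coK v (e+1) y (R.erase q)
        = if q0 ∈ R.erase q then 0
          else ((sg (R.erase q) q0 : ℤ) : k) * coK v e x (insert q0 (R.erase q)) := by
      intro q hq
      have hcard : (R.erase q).card + (e+1) = n := by
        rw [Finset.card_erase_of_mem hq]
        have : 1 ≤ R.card := Finset.card_pos.mpr ⟨q, hq⟩
        omega
      rw [hydef, coK_mk, dif_pos hcard, hcdef]
      by_cases hq0 : q0 ∈ R.erase q
      · rw [if_pos hq0]
        simp only [dif_pos hq0]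
        rfl
      · rw [if_neg hq0]
        simp only [dif_neg hq0]
    have step1 : coK v e (((cechD k n e).app v) y) R
        = ∑ q ∈ R, ((sg (R.erase q) q : ℤ) : k) * coK v (e+1) y (R.erase q) :=
      coK_D v e y hR
    have step2 : ∑ q ∈ R, ((sg (R.erase q) q : ℤ) : k) * coK v (e+1) y (R.erase q)
        = ∑ q ∈ R, ((sg (R.erase q) q : ℤ) : k) *
            (if q0 ∈ R.erase q then 0
              else ((sg (R.erase q) q0 : ℤ) : k) * coK v e x (insert q0 (R.erase q))) :=
      Finset.sum_congr rfl (fun q hq => by rw [hyc q hq])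
    rw [step1, step2]
    by_cases hq0R : q0 ∈ R
    · rw [Finset.sum_eq_single q0]
      · rw [if_neg (Finset.notMem_erase q0 R), Finset.insert_erase hq0R,
          ← mul_assoc, ← Int.cast_mul, sg_mul_self, Int.cast_one, one_mul]
      · intro q hq hqq0
        rw [if_pos (Finset.mem_erase.mpr ⟨fun hc => hqq0 hc.symm, hq0R⟩), mul_zero]
      · intro hc
        exact absurd hq0R hc
    · -- q0 ∉ R : use the hypothesis at `insert q0 R`
      have hxR := hx (insert q0 R) (by rw [Finset.card_insert_of_notMem hq0R]; omega)
      rw [Finset.sum_insert hq0R, Finset.erase_insert hq0R] at hxR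
      have herase : ∀ q ∈ R, (insert q0 R).erase q = insert q0 (R.erase q) :=
        fun q hq => Finset.erase_insert_of_ne (fun hc => hq0R (hc ▸ hq))
      have hxR2 : ((sg R q0 : ℤ) : k) * coK v e x R
          + ∑ q ∈ R, ((sg (insert q0 (R.erase q)) q : ℤ) : k)
              * coK v e x (insert q0 (R.erase q)) = 0 := by
        rw [show (∑ q ∈ R, ((sg (insert q0 (R.erase q)) q : ℤ) : k)
              * coK v e x (insert q0 (R.erase q)))
            = ∑ q ∈ R, ((sg ((insert q0 R).erase q) q : ℤ) : k)
              * coK v e x ((insert q0 R).erase q) from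
          Finset.sum_congr rfl (fun q hq => by rw [herase q hq])]
        exact hxR
      have key : ∀ q ∈ R,
          ((sg (R.erase q) q : ℤ) : k) *
            (if q0 ∈ R.erase q then 0
              else ((sg (R.erase q) q0 : ℤ) : k) * coK v e x (insert q0 (R.erase q)))
          = (-((sg R q0 : ℤ) : k)) *
              (((sg (insert q0 (R.erase q)) q : ℤ) : k)
                * coK v e x (insert q0 (R.erase q))) := by
        intro q hq
        have h1 : q ∉ R.erase q := Finset.notMem_erase q R
        have h2 : q0 ∉ R.erase q := fun hc => hq0R (Finset.mem_of_mem_erase hc)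
        have h3 : q ≠ q0 := fun hc => hq0R (hc ▸ hq)
        have h4 := sg_cross' (P := R.erase q) h1 h2 h3
        rw [Finset.insert_erase hq] at h4
        have h5 := congrArg (fun z : ℤ => (z : k)) h4
        push_cast at h5
        rw [if_neg h2]
        linear_combination (coK v e x (insert q0 (R.erase q))) * h5
      rw [Finset.sum_congr rfl key, ← Finset.mul_sum]
      have hS : ∑ q ∈ R, ((sg (insert q0 (R.erase q)) q : ℤ) : k)
            * coK v e x (insert q0 (R.erase q))
          = -(((sg R q0 : ℤ) : k) * coK v e x R) := by
        linear_combination hxR2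
      rw [hS]
      have hA : ((sg R q0 : ℤ) : k) * ((sg R q0 : ℤ) : k) = 1 := by
        rw [← Int.cast_mul, sg_mul_self, Int.cast_one]
      linear_combination (coK v e x R) * hA
  · have h1 : coK v e (((cechD k n e).app v) y) R = 0 := by
      unfold coK
      rw [dif_neg hR]
    have h2 : coK v e x R = 0 := by
      unfold coK
      rw [dif_neg hR]
    rw [h1, h2]

end Coord4

end Stmt10Aux
namespace Stmt10Aux

section Final

variable {k} {n}

variable (v : Fin n → ℤ)

lemma erase_comm' (s : Finset (Fin n)) (a b : Fin n) :
    (s.erase a).erase b = (s.erase b).erase a := by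
  ext x
  simp only [Finset.mem_erase]
  tauto

/-- `d ∘ d = 0`, componentwise and elementwise. -/
lemma DD_coK (d : ℕ) (x : (cechObj k n (d+2)).obj v) :
    ((cechD k n d).app v) (((cechD k n (d+1)).app v) x) = 0 := by
  apply eq_zero_of_coK
  intro R hR
  rw [coK_D v d _ hR]
  have hinner : ∀ q ∈ R, coK v (d+1) (((cechD k n (d+1)).app v) x) (R.erase q)
      = ∑ p ∈ R.erase q, ((sg ((R.erase q).erase p) p : ℤ) : k)
          * coK v (d+2) x ((R.erase q).erase p) := by
    intro q hq
    exact coK_D v (d+1) x (by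
      rw [Finset.card_erase_of_mem hq]
      have : 1 ≤ R.card := Finset.card_pos.mpr ⟨q, hq⟩
      omega)
  have step : ∑ q ∈ R, ((sg (R.erase q) q : ℤ) : k)
        * coK v (d+1) (((cechD k n (d+1)).app v) x) (R.erase q)
      = ∑ q ∈ R, ∑ p ∈ R.erase q,
          ((sg (R.erase q) q : ℤ) : k) * (((sg ((R.erase q).erase p) p : ℤ) : k)
            * coK v (d+2) x ((R.erase q).erase p)) :=
    Finset.sum_congr rfl (fun q hq => by rw [hinner q hq, Finset.mul_sum])
  rw [step, Finset.sum_sigma']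
  refine Finset.sum_involution (fun z _ => ⟨z.2, z.1⟩) ?_ ?_ ?_ ?_
  · rintro ⟨q, p⟩ hz
    rw [Finset.mem_sigma] at hz
    obtain ⟨hq, hp'⟩ := hz
    have hpq : p ≠ q := (Finset.mem_erase.mp hp').1
    have hpR : p ∈ R := Finset.mem_of_mem_erase hp'
    simp only
    rw [erase_comm' R p q]
    set P := (R.erase q).erase p with hPdef
    have hqP : q ∉ P := fun hc => Finset.notMem_erase q R (Finset.mem_of_mem_erase hc)
    have hpP : p ∉ P := Finset.notMem_erase p _
    have hins1 : R.erase q = insert p P := (Finset.insert_erase hp').symm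
    have hins2 : R.erase p = insert q P := by
      have hqmem : q ∈ R.erase p := Finset.mem_erase.mpr ⟨fun hc => hpq hc.symm, hq⟩
      have := Finset.insert_erase hqmem
      rw [erase_comm' R p q, ← hPdef] at this
      exact this.symm
    rw [hins1, hins2]
    have h4 := sg_cross (P := P) hpP hqP (fun hc => hpq hc)
    have h5 := congrArg (fun z : ℤ => (z : k)) h4
    push_cast at h5
    linear_combination (coK v (d+2) x P) * h5
  · rintro ⟨q, p⟩ hz _
    rw [Finset.mem_sigma] at hz
    have hpq : p ≠ q := (Finset.mem_erase.mp hz.2).1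
    exact fun heq => hpq (congrArg Sigma.fst heq)
  · rintro ⟨q, p⟩ hz
    rw [Finset.mem_sigma] at hz ⊢
    exact ⟨Finset.mem_of_mem_erase hz.2,
      Finset.mem_erase.mpr ⟨fun hc => (Finset.mem_erase.mp hz.2).1 hc.symm, hz.1⟩⟩
  · rintro ⟨q, p⟩ _
    rfl

end Final

end Stmt10Aux
namespace Stmt10Aux

section Eps

variable {k} {n}

variable (v : Fin n → ℤ)

lemma GP_univ : GP v Finset.univ :=
  GP_iff.mpr (fun i hi => absurd (Finset.mem_univ i) hi)

/-- the unique index in degree 0 (assuming implicitly nothing) -/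
def uidx : cechIdx n 0 := ⟨Finset.univ, by simp⟩

lemma uniq_idx0 (Q : cechIdx n 0) : Q = uidx := by
  apply Subtype.ext
  have := Q.2
  exact (Finset.card_eq_iff_eq_univ Q.1).mp (by simpa using this)

lemma eps_app (x : (cechObj k n 0).obj v) :
    ((cechEps k n).app v) x
      = Submodule.Quotient.mk (p := gate k (¬ ∀ i, v i ≤ -1)) (coK v 0 x Finset.univ) := by
  conv_lhs => rw [decomp v 0 x]
  erw [map_sum]
  rw [Finset.sum_eq_single (uidx (n := n))]
  · have e0 : biproduct.ι (bfam (k := k) (n := n) 0) (uidx (n := n)) ≫ cechEps k n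
        = epsComp k n Finset.univ := biproduct.ι_desc _ _
    have e1 := ConcreteCategory.congr_hom (congrFun (congrArg NatTrans.app e0) v)
      (((biproduct.π (bfam (k := k) (n := n) 0) (uidx (n := n))).app v) x)
    have e2 : ((cechEps k n).app v)
        (((biproduct.ι (bfam (k := k) (n := n) 0) (uidx (n := n))).app v)
          (((biproduct.π (bfam (k := k) (n := n) 0) (uidx (n := n))).app v) x))
        = ((epsComp k n Finset.univ).app v)
          (((biproduct.π (bfam (k := k) (n := n) 0) (uidx (n := n))).app v) x) := e1
    rw [e2]
    have e3 : coK v 0 x Finset.univ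
        = (((biproduct.π (bfam (k := k) (n := n) 0) (uidx (n := n))).app v) x).1 := by
      unfold coK
      rw [dif_pos (show Finset.univ.card + 0 = n from by simp)]
      rfl
    rw [e3]
    rfl
  · intro Q _ hQ
    exact absurd (uniq_idx0 Q) hQ
  · intro hc
    exact absurd (Finset.mem_univ _) hc

/-- the composite `D₀ ≫ ε` vanishes elementwise. -/
lemma eps_D_zero (x : (cechObj k n 1).obj v) :
    ((cechEps k n).app v) (((cechD k n 0).app v) x) = 0 := by
  by_cases hvall : ∀ i, v i ≤ -1
  · -- all level-1 gates vanish, so x = 0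
    have hx : x = 0 := by
      apply eq_zero_of_coK
      intro R hRc
      refine gate_val_eq_zero (P := GP v R) ?_ (coK_mem v 1 x R)
      rw [GP_iff]
      intro hGP
      have hRne : ∃ i, i ∉ R := by
        by_contra hc
        push_neg at hc
        have : R = Finset.univ := Finset.eq_univ_iff_forall.mpr hc
        rw [this] at hRc
        simp only [Finset.card_univ, Fintype.card_fin] at hRc
        omega
      obtain ⟨i, hi⟩ := hRne
      have h1 := hGP i hi
      have h2 := hvall i
      omega
    rw [hx, map_zero, map_zero]
  · rw [eps_app]
    exact (Submodule.Quotient.mk_eq_zero _).mpr (Or.inl hvall)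

/-- when `v ≤ -𝟙`, all `Ω_{d+1}` vanish at grade `v`. -/
lemma level_pos_zero (hvall : ∀ i, v i ≤ -1) (hn : 1 ≤ n) (d : ℕ)
    (x : (cechObj k n (d+1)).obj v) : x = 0 := by
  apply eq_zero_of_coK
  intro R hRc
  refine gate_val_eq_zero (P := GP v R) ?_ (coK_mem v (d+1) x R)
  rw [GP_iff]
  intro hGP
  have hRne : ∃ i, i ∉ R := by
    by_contra hc
    push_neg at hc
    have : R = Finset.univ := Finset.eq_univ_iff_forall.mpr hc
    rw [this] at hRc
    simp only [Finset.card_univ, Fintype.card_fin] at hRc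
    omega
  obtain ⟨i, hi⟩ := hRne
  have h1 := hGP i hi
  have h2 := hvall i
  omega

lemma exists_q0 (hvall : ¬ ∀ i, v i ≤ -1) : ∃ q0, 0 ≤ v q0 := by
  push_neg at hvall
  obtain ⟨i, hi⟩ := hvall
  exact ⟨i, by omega⟩

end Eps

end Stmt10Aux
/-- The Čech complex is a flat resolution of `I(−𝟙)`: the augmented
complex `0 → Ω_n → ⋯ → Ω_1 → Ω_0 → I(−𝟙) → 0` is a complex and it is exact
(componentwise, i.e. at every grade `v ∈ ℤⁿ`).  In particular `H_d(Ω_•) = 0` for `d > 0`,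
`ε` is surjective and it induces an isomorphism `H_0(Ω_•) ≅ I(−𝟙)`. -/
theorem statement10 (hn : 1 ≤ n) :
    (∀ d : ℕ, cechD k n (d+1) ≫ cechD k n d = 0) ∧
    (cechD k n 0 ≫ cechEps k n = 0) ∧
    (∀ v : Fin n → ℤ, Function.Surjective ((cechEps k n).app v)) ∧
    (∀ v : Fin n → ℤ, Function.Exact ((cechD k n 0).app v) ((cechEps k n).app v)) ∧
    (∀ (d : ℕ) (v : Fin n → ℤ),
      Function.Exact ((cechD k n (d+1)).app v) ((cechD k n d).app v)) := by
  classical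
  refine ⟨?_, ?_, ?_, ?_, ?_⟩
  · intro d
    refine NatTrans.ext (funext fun v => ModuleCat.hom_ext (LinearMap.ext fun x => ?_))
    show ((cechD k n d).app v) (((cechD k n (d+1)).app v) x) = 0
    exact Stmt10Aux.DD_coK v d x
  · refine NatTrans.ext (funext fun v => ModuleCat.hom_ext (LinearMap.ext fun x => ?_))
    show ((cechEps k n).app v) (((cechD k n 0).app v) x) = 0
    exact Stmt10Aux.eps_D_zero v x
  · intro v y
    obtain ⟨a, ha⟩ := Submodule.Quotient.mk_surjective _ y
    refine ⟨((biproduct.ι (Stmt10Aux.bfam (k := k) (n := n) 0) (Stmt10Aux.uidx (n := n))).app v)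
      ⟨a, Or.inl (Stmt10Aux.GP_univ v)⟩, ?_⟩
    erw [Stmt10Aux.eps_app, Stmt10Aux.coK_ι,
      if_pos (show Finset.univ = (Stmt10Aux.uidx (n := n) : cechIdx n 0).1 from rfl)]
    exact ha
  · intro v y
    constructor
    · intro hy
      by_cases hvall : ∀ i, v i ≤ -1
      · have hc0 : Stmt10Aux.coK v 0 y Finset.univ = 0 := by
          rw [Stmt10Aux.eps_app] at hy
          have hmem := (Submodule.Quotient.mk_eq_zero _).mp hy
          exact hmem.resolve_left (fun hh => hh hvall)
        have hy0 : y = 0 := by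
          apply Stmt10Aux.eq_zero_of_coK
          intro R hR
          have hRu : R = Finset.univ := (Finset.card_eq_iff_eq_univ R).mp (by simpa using hR)
          rw [hRu]
          exact hc0
        exact ⟨0, by rw [map_zero, hy0]⟩
      · obtain ⟨q0, hq0⟩ := Stmt10Aux.exists_q0 v hvall
        obtain ⟨z, hz⟩ := Stmt10Aux.homotopy v q0 hq0 0 y (fun R hR => by
          exfalso
          have h1 : R.card ≤ n := by simpa using Finset.card_le_univ R
          omega)
        exact ⟨z, hz⟩
    · rintro ⟨z, rfl⟩
      exact Stmt10Aux.eps_D_zero v z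
  · intro d v y
    constructor
    · intro hy
      by_cases hvall : ∀ i, v i ≤ -1
      · have hy0 : y = 0 := Stmt10Aux.level_pos_zero v hvall hn d y
        exact ⟨0, by rw [map_zero, hy0]⟩
      · obtain ⟨q0, hq0⟩ := Stmt10Aux.exists_q0 v hvall
        obtain ⟨z, hz⟩ := Stmt10Aux.homotopy v q0 hq0 (d+1) y (fun R hR => by
          have hR' : R.card + d = n := by omega
          rw [← Stmt10Aux.coK_D v d y hR', hy, Stmt10Aux.coK_zero])
        exact ⟨z, hz⟩
    · rintro ⟨z, rfl⟩
      exact Stmt10Aux.DD_coK v d z
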